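/- Let n ≥ 6 be an integer. Then the set of elements w of the standard family Fₙ with δ(v_{n−1,n}, w) = 1 is exactly {0, v_{n−2,n}, v_{1,n−1}}, where δ(v,w) := min(d(v,w), n − d(v,w)) and d is the Hamming distance. -/
import Mathlib


/-- Indicator vector of the set of labels {i, i+1, …, j−1}, coordinates labelled 1,…,n. -/
def stdVec (n i j : ℕ) : Fin n → ZMod 2 :=
  fun k => if i ≤ k.val + 1 ∧ k.val + 1 < j then 1 else 0

/-- δ(v,w) = min(d(v,w), n − d(v,w)), where d is the Hamming distance. -/
def hdelta {n : ℕ} (v w : Fin n → ZMod 2) : ℕ :=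
  min (hammingDist v w) (n - hammingDist v w)

/-- The standard family Fₙ: the zero vector together with the vectors v_{i,j}
for 1 ≤ i < j ≤ n. -/
def stdFamily (n : ℕ) : Finset (Fin n → ZMod 2) :=
  insert 0 ((((Finset.Icc 1 n) ×ˢ (Finset.Icc 1 n)).filter fun p => p.1 < p.2).image
    fun p => stdVec n p.1 p.2)

lemma stdVec_ne_iff (n a b i j : ℕ) (k : Fin n) :
    stdVec n a b k ≠ stdVec n i j k ↔
      ¬((a ≤ k.val + 1 ∧ k.val + 1 < b) ↔ (i ≤ k.val + 1 ∧ k.val + 1 < j)) := by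
  simp only [stdVec]
  split_ifs with h1 h2 h2 <;> simp [h1, h2]

lemma card_S (n i j : ℕ) (hi : 1 ≤ i) (hj : j ≤ n + 1) :
    (Finset.univ.filter fun k : Fin n => i ≤ k.val + 1 ∧ k.val + 1 < j).card = j - i := by
  rw [← Nat.card_Ico i j]
  apply Finset.card_bij (fun k _ => k.val + 1)
  · intro k hk
    simp only [Finset.mem_filter] at hk
    simp [Finset.mem_Ico]
    omega
  · intro k _ k' _ h
    exact Fin.ext (by omega)
  · intro m hm
    simp only [Finset.mem_Ico] at hm
    refine ⟨⟨m - 1, by omega⟩, ?_, by simp; omega⟩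
    simp
    omega

lemma hd_eq (n i j : ℕ) (hn : 6 ≤ n) (hi : 1 ≤ i) (hj : j ≤ n) :
    hammingDist (stdVec n (n - 1) n) (stdVec n i j) =
      if i ≤ n - 1 ∧ n - 1 < j then j - i - 1 else j - i + 1 := by
  unfold hammingDist
  by_cases h : i ≤ n - 1 ∧ n - 1 < j
  · rw [if_pos h]
    have hmem : (⟨n - 2, by omega⟩ : Fin n) ∈
        Finset.univ.filter fun k : Fin n => i ≤ k.val + 1 ∧ k.val + 1 < j := by
      simp; omega
    have : (Finset.univ.filter fun k : Fin n => stdVec n (n - 1) n k ≠ stdVec n i j k) =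
        (Finset.univ.filter fun k : Fin n => i ≤ k.val + 1 ∧ k.val + 1 < j).erase
          ⟨n - 2, by omega⟩ := by
      ext k
      have hk := k.isLt
      simp only [Finset.mem_erase, Finset.mem_filter, Finset.mem_univ, true_and,
        stdVec_ne_iff, ne_eq, Fin.ext_iff, Fin.val_mk]
      omega
    rw [this, Finset.card_erase_of_mem hmem, card_S n i j hi (by omega)]
  · rw [if_neg h]
    have hmem : (⟨n - 2, by omega⟩ : Fin n) ∉
        Finset.univ.filter fun k : Fin n => i ≤ k.val + 1 ∧ k.val + 1 < j := by
      simp; omega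
    have : (Finset.univ.filter fun k : Fin n => stdVec n (n - 1) n k ≠ stdVec n i j k) =
        insert (⟨n - 2, by omega⟩ : Fin n)
          (Finset.univ.filter fun k : Fin n => i ≤ k.val + 1 ∧ k.val + 1 < j) := by
      ext k
      have hk := k.isLt
      simp only [Finset.mem_insert, Finset.mem_filter, Finset.mem_univ, true_and,
        stdVec_ne_iff, Fin.ext_iff, Fin.val_mk]
      omega
    rw [this, Finset.card_insert_of_notMem hmem, card_S n i j hi (by omega)]

lemma hd_zero (n : ℕ) (hn : 6 ≤ n) : hammingDist (stdVec n (n - 1) n) (0 : Fin n → ZMod 2) = 1 := by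
  unfold hammingDist
  have : (Finset.univ.filter fun k : Fin n => stdVec n (n - 1) n k ≠ (0 : Fin n → ZMod 2) k) =
      Finset.univ.filter fun k : Fin n => n - 1 ≤ k.val + 1 ∧ k.val + 1 < n := by
    ext k; simp [stdVec]
  rw [this, card_S n (n - 1) n (by omega) (by omega)]
  omega


theorem stmt_11 (n : ℕ) (hn : 6 ≤ n) :
    (stdFamily n).filter (fun w => hdelta (stdVec n (n - 1) n) w = 1) =
      {0, stdVec n (n - 2) n, stdVec n 1 (n - 1)} := by
  ext w
  simp only [Finset.mem_filter, stdFamily, Finset.mem_insert, Finset.mem_image,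
    Finset.mem_product, Finset.mem_Icc, Finset.mem_singleton, Prod.exists]
  constructor
  · rintro ⟨(rfl | ⟨i, j, hij, rfl⟩), hδ⟩
    · left; rfl
    · obtain ⟨⟨⟨hi1, hi2⟩, hj1, hj2⟩, hlt⟩ := hij
      unfold hdelta at hδ
      rw [hd_eq n i j hn hi1 hj2] at hδ
      by_cases h : i ≤ n - 1 ∧ n - 1 < j
      · rw [if_pos h] at hδ
        have hij2 : i = n - 2 ∧ j = n := by omega
        right; left; rw [hij2.1, hij2.2]
      · rw [if_neg h] at hδ
        have hij2 : i = 1 ∧ j = n - 1 := by omega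
        right; right; rw [hij2.1, hij2.2]
  · rintro (rfl | rfl | rfl)
    · exact ⟨Or.inl rfl, by unfold hdelta; rw [hd_zero n hn]; omega⟩
    · refine ⟨Or.inr ⟨n - 2, n, ?_, rfl⟩, ?_⟩
      · omega
      · unfold hdelta
        rw [hd_eq n (n - 2) n hn (by omega) le_rfl, if_pos (by omega)]
        omega
    · refine ⟨Or.inr ⟨1, n - 1, ?_, rfl⟩, ?_⟩
      · omega
      · unfold hdelta
        rw [hd_eq n 1 (n - 1) hn le_rfl (by omega), if_neg (by omega)]
        omega
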